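/- Let B > 0, s ≥ 0 and t ∈ ℝ. If G : ℝ² → [0, ∞) is measurable, satisfies G(x_⊥) ≤ (B/(2π)) s for almost every x_⊥ ∈ ℝ², and ∫_{ℝ²} G(x_⊥) dx_⊥ ≤ s, then ∫_{ℝ²} G(x_⊥) / √(|x_⊥|² + t²) dx_⊥ ≤ s · V_L^B(t). -/

import Mathlib

open MeasureTheory Real Filter

noncomputable section


/-- The potential `V_L^B(t) = 2 / (√(2/B + t²) + |t|)`. -/
def VL (B : ℝ) (t : ℝ) : ℝ := 2 / (Real.sqrt (2 / B + t ^ 2) + |t|)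

local notation "E2" => EuclideanSpace ℝ (Fin 2)

lemma lintegral_norm_eucl2 (Φ : ℝ → ENNReal) (hΦ : Measurable Φ) :
    (∫⁻ x : E2, Φ ‖x‖) =
      2 * volume (Metric.ball (0 : E2) 1) *
        ∫⁻ y in Set.Ioi (0 : ℝ), ENNReal.ofReal y * Φ y := by
  have hdim : Module.finrank ℝ E2 = 2 := by
    simp [finrank_euclideanSpace]
  have h0 : (∫⁻ x : E2, Φ ‖x‖) = ∫⁻ x in ({0}ᶜ : Set E2), Φ ‖x‖ := by
    rw [MeasureTheory.restrict_compl_singleton]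
  have h1 : (∫⁻ x : ({0}ᶜ : Set E2), Φ ‖(x : E2)‖ ∂((volume : Measure E2).comap Subtype.val))
      = ∫⁻ x in ({0}ᶜ : Set E2), Φ ‖x‖ ∂(volume : Measure E2) :=
    lintegral_subtype_comap (measurableSet_singleton (0 : E2)).compl (fun x => Φ ‖x‖)
  have h2 := (Measure.measurePreserving_homeomorphUnitSphereProd
      (volume : Measure E2)).lintegral_comp
      (f := fun p : Metric.sphere (0:E2) 1 × Set.Ioi (0:ℝ) => Φ p.2.1)
      (hΦ.comp (measurable_subtype_coe.comp measurable_snd))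
  simp only [homeomorphUnitSphereProd_apply_snd_coe] at h2
  have h3 : (∫⁻ p : Metric.sphere (0:E2) 1 × Set.Ioi (0:ℝ), Φ p.2.1
        ∂((volume : Measure E2).toSphere.prod
          (Measure.volumeIoiPow (Module.finrank ℝ E2 - 1))))
      = (volume : Measure E2).toSphere Set.univ *
        ∫⁻ y : Set.Ioi (0:ℝ), Φ y.1 ∂(Measure.volumeIoiPow (Module.finrank ℝ E2 - 1)) := by
    rw [← lintegral_map (f := fun y : Set.Ioi (0:ℝ) => Φ y.1)
        (hΦ.comp measurable_subtype_coe) measurable_snd,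
      Measure.map_snd_prod, lintegral_smul_measure, smul_eq_mul]
  have h4 : (∫⁻ y : Set.Ioi (0:ℝ), Φ y.1 ∂(Measure.volumeIoiPow (Module.finrank ℝ E2 - 1)))
      = ∫⁻ y in Set.Ioi (0 : ℝ), ENNReal.ofReal y * Φ y := by
    rw [hdim, Measure.volumeIoiPow, lintegral_withDensity_eq_lintegral_mul _
        (f := fun r : Set.Ioi (0:ℝ) => ENNReal.ofReal (r.1 ^ (2 - 1)))
        (by exact (measurable_subtype_coe.pow_const _).ennreal_ofReal)
        (g := fun y : Set.Ioi (0:ℝ) => Φ y.1)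
        (hΦ.comp measurable_subtype_coe)]
    have h5 := lintegral_subtype_comap (μ := (volume : Measure ℝ))
      (measurableSet_Ioi (a := (0:ℝ)))
      (fun y => ENNReal.ofReal (y ^ (2 - 1)) * Φ y)
    simp only [Pi.mul_apply]
    norm_num at h5 ⊢
    exact h5
  rw [h0, ← h1, h2, h3, h4, Measure.toSphere_apply_univ, hdim]
  norm_num


set_option maxHeartbeats 2000000 in
/-- **The bathtub principle bound:** if `0 ≤ G ≤ (B/2π) s` a.e. and `∫ G ≤ s`, then
`∫ G(x_⊥)/√(|x_⊥|² + t²) dx_⊥ ≤ s · V_L^B(t)`. -/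
theorem bathtub_bound (B s t : ℝ) (hB : 0 < B) (hs : 0 ≤ s)
    (G : EuclideanSpace ℝ (Fin 2) → ℝ) (hGmeas : Measurable G) (hGnonneg : ∀ x, 0 ≤ G x)
    (hGbound : ∀ᵐ x : EuclideanSpace ℝ (Fin 2) ∂(volume : Measure (EuclideanSpace ℝ (Fin 2))),
      G x ≤ B / (2 * π) * s)
    (hGint : (∫⁻ x : EuclideanSpace ℝ (Fin 2), ENNReal.ofReal (G x)) ≤ ENNReal.ofReal s) :
    (∫⁻ x : EuclideanSpace ℝ (Fin 2), ENNReal.ofReal (G x / Real.sqrt (‖x‖ ^ 2 + t ^ 2))) ≤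
      ENNReal.ofReal (s * VL B t) := by
  -- notation
  set M : ℝ := B / (2 * π) * s with hM
  set r : ℝ := Real.sqrt (2 / B) with hr
  set a : ℝ := Real.sqrt (2 / B + t ^ 2) with ha
  have h2B : (0:ℝ) < 2 / B := by positivity
  have hr0 : 0 < r := Real.sqrt_pos.2 h2B
  have hrsq : r ^ 2 = 2 / B := Real.sq_sqrt h2B.le
  have ha0 : 0 < a := Real.sqrt_pos.2 (by positivity)
  have hasq : a ^ 2 = 2 / B + t ^ 2 := Real.sq_sqrt (by positivity)
  have hM0 : 0 ≤ M := by positivity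
  set g : E2 → ℝ := fun x => Real.sqrt (‖x‖ ^ 2 + t ^ 2) with hg
  have hgmeas : Measurable g := by
    exact (measurable_norm.pow_const 2).add_const _ |>.sqrt
  set Gs : E2 → ℝ := Set.indicator (Metric.closedBall (0:E2) r) (fun _ => M) with hGs
  have hGsmeas : Measurable Gs := by
    exact measurable_const.indicator Metric.isClosed_closedBall.measurableSet
  -- `a.e.` pointwise inequality
  have hae : ∀ᵐ x : E2 ∂volume,
      ENNReal.ofReal (G x / g x) + ENNReal.ofReal a⁻¹ * ENNReal.ofReal (Gs x)
        ≤ ENNReal.ofReal (Gs x / g x) + ENNReal.ofReal a⁻¹ * ENNReal.ofReal (G x) := by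
    have hne : ∀ᵐ x : E2 ∂volume, x ≠ 0 := by
      refine (ae_iff).2 ?_
      simpa using measure_singleton (0 : E2)
    filter_upwards [hGbound, hne] with x hGx hx0
    have hgx : 0 < g x := by
      have : 0 < ‖x‖ := norm_pos_iff.2 hx0
      rw [hg]
      positivity
    have hGs0 : 0 ≤ Gs x := Set.indicator_nonneg (fun _ _ => hM0) x
    have hdiv1 : 0 ≤ G x / g x := div_nonneg (hGnonneg x) (Real.sqrt_nonneg _)
    have hdiv2 : 0 ≤ Gs x / g x := div_nonneg hGs0 (Real.sqrt_nonneg _)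
    have hainv : (0:ℝ) ≤ a⁻¹ := inv_nonneg.2 ha0.le
    rw [← ENNReal.ofReal_mul hainv, ← ENNReal.ofReal_mul hainv,
      ← ENNReal.ofReal_add hdiv1 (mul_nonneg hainv hGs0),
      ← ENNReal.ofReal_add hdiv2 (mul_nonneg hainv (hGnonneg x))]
    refine ENNReal.ofReal_le_ofReal ?_
    by_cases hx : x ∈ Metric.closedBall (0:E2) r
    · have hGsx : Gs x = M := by simp [hGs, hx]
      have hga : g x ≤ a := by
        rw [hg, ha]
        apply Real.sqrt_le_sqrt
        have : ‖x‖ ≤ r := by simpa using hx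
        nlinarith [norm_nonneg x]
      have h1 : a⁻¹ ≤ (g x)⁻¹ := by
        apply inv_anti₀ hgx hga
      have h2 : (M - G x) * a⁻¹ ≤ (M - G x) * (g x)⁻¹ :=
        mul_le_mul_of_nonneg_left h1 (by linarith)
      rw [hGsx, div_eq_mul_inv, div_eq_mul_inv]
      nlinarith
    · have hGsx : Gs x = 0 := by simp only [hGs]; exact Set.indicator_of_notMem hx _
      have hga : a ≤ g x := by
        rw [hg, ha]
        apply Real.sqrt_le_sqrt
        have : r ≤ ‖x‖ := by
          by_contra h
          exact hx (by simpa using (le_of_not_ge h))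
        nlinarith
      have h1 : (g x)⁻¹ ≤ a⁻¹ := inv_anti₀ ha0 hga
      have h2 : G x * (g x)⁻¹ ≤ a⁻¹ * G x := by
        calc G x * (g x)⁻¹ ≤ G x * a⁻¹ := mul_le_mul_of_nonneg_left h1 (hGnonneg x)
          _ = a⁻¹ * G x := mul_comm _ _
      rw [hGsx, div_eq_mul_inv, div_eq_mul_inv]
      simp only [mul_zero, add_zero, zero_mul, zero_add]
      exact h2
  -- integrate the pointwise inequality
  have hGdivmeas : Measurable fun x : E2 => ENNReal.ofReal (G x / g x) :=
    (hGmeas.div hgmeas).ennreal_ofReal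
  have hGsdivmeas : Measurable fun x : E2 => ENNReal.ofReal (Gs x / g x) :=
    (hGsmeas.div hgmeas).ennreal_ofReal
  have hGsofmeas : Measurable fun x : E2 => ENNReal.ofReal (Gs x) := hGsmeas.ennreal_ofReal
  have hGofmeas : Measurable fun x : E2 => ENNReal.ofReal (G x) := hGmeas.ennreal_ofReal
  have hkey : (∫⁻ x : E2, ENNReal.ofReal (G x / g x)) +
        ENNReal.ofReal a⁻¹ * ∫⁻ x : E2, ENNReal.ofReal (Gs x)
      ≤ (∫⁻ x : E2, ENNReal.ofReal (Gs x / g x)) +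
        ENNReal.ofReal a⁻¹ * ∫⁻ x : E2, ENNReal.ofReal (G x) := by
    rw [← lintegral_const_mul _ hGsofmeas, ← lintegral_const_mul _ hGofmeas,
      ← lintegral_add_left hGdivmeas, ← lintegral_add_left hGsdivmeas]
    exact lintegral_mono_ae hae
  -- ∫ Gs = s
  have hvolball : volume (Metric.closedBall (0:E2) r) = ENNReal.ofReal (2 / B * π) := by
    rw [EuclideanSpace.volume_closedBall]
    simp only [Fintype.card_fin]
    have h22 : ((2:ℕ):ℝ) / 2 + 1 = 2 := by norm_num
    rw [h22, Real.Gamma_two]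
    rw [← ENNReal.ofReal_pow hr0.le, hrsq]
    rw [← ENNReal.ofReal_mul (by positivity)]
    congr 1
    rw [Real.sq_sqrt Real.pi_pos.le]
    ring
  have hGsint : (∫⁻ x : E2, ENNReal.ofReal (Gs x)) = ENNReal.ofReal s := by
    have : ∀ x : E2, ENNReal.ofReal (Gs x) =
        Set.indicator (Metric.closedBall (0:E2) r) (fun _ => ENNReal.ofReal M) x := by
      intro x
      by_cases hx : x ∈ Metric.closedBall (0:E2) r <;>
        simp [hGs, hx]
    simp_rw [this]
    rw [lintegral_indicator Metric.isClosed_closedBall.measurableSet _, setLIntegral_const, hvolball,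
      ← ENNReal.ofReal_mul hM0]
    congr 1
    rw [hM]
    field_simp
  -- compute the integral of `Gs / g` via polar coordinates
  set Φ : ℝ → ENNReal := fun y =>
    ENNReal.ofReal (Set.indicator (Set.Iic r) (fun _ => M) y / Real.sqrt (y ^ 2 + t ^ 2))
    with hPhi
  have hΦmeas : Measurable Φ := by
    exact ((measurable_const.indicator measurableSet_Iic).div
      (((measurable_id.pow_const 2).add_const _).sqrt)).ennreal_ofReal
  have hΦnorm : ∀ x : E2, ENNReal.ofReal (Gs x / g x) = Φ ‖x‖ := by
    intro x
    by_cases hx : ‖x‖ ≤ r <;>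
      simp [hPhi, hGs, hg, Set.indicator_apply, Metric.mem_closedBall, dist_zero_right, hx]
  have hf : ∀ y : ℝ, M * (y / Real.sqrt (y ^ 2 + t ^ 2)) = y * M / Real.sqrt (y ^ 2 + t ^ 2) := by
    intro y; ring
  -- 1-d integral computation
  have hint : IntegrableOn (fun y => M * (y / Real.sqrt (y ^ 2 + t ^ 2))) (Set.Ioc 0 r) := by
    have hmeas : Measurable fun y : ℝ => M * (y / Real.sqrt (y ^ 2 + t ^ 2)) :=
      measurable_const.mul (measurable_id.div ((measurable_id.pow_const 2).add_const _).sqrt)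
    refine Integrable.mono' (g := fun _ => M) ?_ hmeas.aestronglyMeasurable ?_
    · exact integrableOn_const measure_Ioc_lt_top.ne
    · refine (ae_restrict_iff' measurableSet_Ioc).2 (ae_of_all _ fun y hy => ?_)
      have hy0 : 0 < y := hy.1
      have hsq : 0 < Real.sqrt (y ^ 2 + t ^ 2) := Real.sqrt_pos.2 (by positivity)
      have hle : y / Real.sqrt (y ^ 2 + t ^ 2) ≤ 1 := by
        rw [div_le_one hsq]
        calc y = Real.sqrt (y ^ 2) := (Real.sqrt_sq hy0.le).symm
          _ ≤ Real.sqrt (y ^ 2 + t ^ 2) := Real.sqrt_le_sqrt (by nlinarith)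
      have h0 : 0 ≤ y / Real.sqrt (y ^ 2 + t ^ 2) := div_nonneg hy0.le hsq.le
      rw [Real.norm_eq_abs, abs_of_nonneg (mul_nonneg hM0 h0)]
      calc M * (y / Real.sqrt (y ^ 2 + t ^ 2)) ≤ M * 1 := mul_le_mul_of_nonneg_left hle hM0
        _ = M := mul_one M
  have habs : |t| ≤ a := by
    rw [ha, ← Real.sqrt_sq_eq_abs]
    exact Real.sqrt_le_sqrt (by nlinarith)
  have hreal : (∫ y in Set.Ioc (0:ℝ) r, M * (y / Real.sqrt (y ^ 2 + t ^ 2))) =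
      M * (a - |t|) := by
    rw [← intervalIntegral.integral_of_le hr0.le]
    have hFTC := intervalIntegral.integral_eq_sub_of_hasDeriv_right_of_le
      (f := fun y => M * Real.sqrt (y ^ 2 + t ^ 2))
      (f' := fun y => M * (y / Real.sqrt (y ^ 2 + t ^ 2)))
      hr0.le
      (Continuous.continuousOn (continuous_const.mul
        (Real.continuous_sqrt.comp ((continuous_pow 2).add continuous_const))))
      ?_ ?_
    · rw [hFTC]
      show M * Real.sqrt (r ^ 2 + t ^ 2) - M * Real.sqrt ((0:ℝ) ^ 2 + t ^ 2) = M * (a - |t|)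
      rw [hrsq]
      have h0t : (0:ℝ) ^ 2 + t ^ 2 = t ^ 2 := by ring
      rw [h0t, Real.sqrt_sq_eq_abs, ← ha]
      ring
    · intro y hy
      have hy0 : 0 < y := hy.1
      have hpos : (0:ℝ) < y ^ 2 + t ^ 2 := by positivity
      have hsq : 0 < Real.sqrt (y ^ 2 + t ^ 2) := Real.sqrt_pos.2 hpos
      have hd : HasDerivAt (fun y : ℝ => M * Real.sqrt (y ^ 2 + t ^ 2))
          (M * (y / Real.sqrt (y ^ 2 + t ^ 2))) y := by
        have hinner : HasDerivAt (fun y : ℝ => y ^ 2 + t ^ 2) (2 * y) y := by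
          simpa using (hasDerivAt_pow 2 y).add_const (t ^ 2)
        have houter := (Real.hasDerivAt_sqrt hpos.ne').comp y hinner
        have := houter.const_mul M
        refine this.congr_deriv ?_
        field_simp
      exact hd.hasDerivWithinAt
    · rw [intervalIntegrable_iff_integrableOn_Ioc_of_le hr0.le]
      exact hint
  have hvol1 : volume (Metric.ball (0:E2) 1) = ENNReal.ofReal π := by
    rw [EuclideanSpace.volume_ball]
    simp only [Fintype.card_fin]
    have h22 : ((2:ℕ):ℝ) / 2 + 1 = 2 := by norm_num
    rw [h22, Real.Gamma_two]
    rw [Real.sq_sqrt Real.pi_pos.le]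
    simp
  have hJ : (∫⁻ y in Set.Ioi (0:ℝ), ENNReal.ofReal y * Φ y) =
      ENNReal.ofReal (M * (a - |t|)) := by
    have hsplit : Set.Ioi (0:ℝ) = Set.Ioc 0 r ∪ Set.Ioi r := (Set.Ioc_union_Ioi_eq_Ioi hr0.le).symm
    rw [hsplit, lintegral_union measurableSet_Ioi (Set.Ioc_disjoint_Ioi le_rfl)]
    have hIoi : (∫⁻ y in Set.Ioi r, ENNReal.ofReal y * Φ y) = 0 := by
      rw [setLIntegral_congr_fun measurableSet_Ioi
        (fun y (hy : r < y) => ?_), lintegral_zero]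
      have : Set.indicator (Set.Iic r) (fun _ => M) y = 0 :=
        Set.indicator_of_notMem (by simpa using hy.not_ge) _
      simp [hPhi, this]
    have hIoc : (∫⁻ y in Set.Ioc 0 r, ENNReal.ofReal y * Φ y) =
        ENNReal.ofReal (M * (a - |t|)) := by
      rw [setLIntegral_congr_fun measurableSet_Ioc
        (fun y hy =>
          show ENNReal.ofReal y * Φ y = ENNReal.ofReal (M * (y / Real.sqrt (y ^ 2 + t ^ 2)))
          from ?_)]
      · rw [← ofReal_integral_eq_lintegral_ofReal hint ?_, hreal]
        refine (ae_restrict_iff' measurableSet_Ioc).2 (ae_of_all _ fun y hy => ?_)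
        have hsq : (0:ℝ) ≤ Real.sqrt (y ^ 2 + t ^ 2) := Real.sqrt_nonneg _
        exact mul_nonneg hM0 (div_nonneg hy.1.le hsq)
      · have hind : Set.indicator (Set.Iic r) (fun _ => M) y = M :=
          Set.indicator_of_mem (by simpa using hy.2) _
        show ENNReal.ofReal y *
            ENNReal.ofReal (Set.indicator (Set.Iic r) (fun _ => M) y / Real.sqrt (y ^ 2 + t ^ 2))
            = ENNReal.ofReal (M * (y / Real.sqrt (y ^ 2 + t ^ 2)))
        rw [hind, ← ENNReal.ofReal_mul hy.1.le]
        congr 1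
        ring
    rw [hIoc, hIoi, add_zero]
  have hC : (∫⁻ x : E2, ENNReal.ofReal (Gs x / g x)) = ENNReal.ofReal (s * VL B t) := by
    calc (∫⁻ x : E2, ENNReal.ofReal (Gs x / g x)) = ∫⁻ x : E2, Φ ‖x‖ := by
          exact lintegral_congr hΦnorm
      _ = 2 * volume (Metric.ball (0:E2) 1) * ∫⁻ y in Set.Ioi (0:ℝ), ENNReal.ofReal y * Φ y :=
          lintegral_norm_eucl2 Φ hΦmeas
      _ = ENNReal.ofReal (s * VL B t) := by
          rw [hvol1, hJ]
          rw [show (2:ENNReal) = ENNReal.ofReal 2 by norm_num,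
            ← ENNReal.ofReal_mul (by norm_num), ← ENNReal.ofReal_mul (by positivity)]
          congr 1
          have hat : 0 < a + |t| := by positivity
          have hsq : a ^ 2 - t ^ 2 = 2 / B := by rw [hasq]; ring
          have h3 : |t| ^ 2 = t ^ 2 := sq_abs t
          have h2 : (a - |t|) * (a + |t|) = 2 / B := by linear_combination hsq - h3
          have h2b : (a - |t|) * (a + |t|) * B = 2 := by
            rw [h2]; field_simp
          rw [VL, ← ha, hM]
          field_simp
          linear_combination s * h2b
  -- conclude
  rw [hGsint] at hkey
  have hkey2 : (∫⁻ x : E2, ENNReal.ofReal (G x / g x)) + ENNReal.ofReal a⁻¹ * ENNReal.ofReal s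
      ≤ (∫⁻ x : E2, ENNReal.ofReal (Gs x / g x)) + ENNReal.ofReal a⁻¹ * ENNReal.ofReal s :=
    le_trans hkey (add_le_add le_rfl (mul_le_mul_right hGint _))
  have hne : ENNReal.ofReal a⁻¹ * ENNReal.ofReal s ≠ ⊤ :=
    ENNReal.mul_ne_top ENNReal.ofReal_ne_top ENNReal.ofReal_ne_top
  have hfinal := (ENNReal.add_le_add_iff_right hne).1 hkey2
  rw [hC] at hfinal
  exact hfinal
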